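/- arXiv:1008.2295 — 2 statements merged into one kernel-verified Lean document; each statement's English description precedes it below -/
import Mathlib

section
/- Let m be a positive integer, let α₁,...,α_k be positive irrational real numbers and β₁,...,β_k any real numbers, and set θ_i = 1/α_i and γ_i = −β_i/α_i; assume Σ_{i=1}^k θ_i = m. Then the family {S(α₁,β₁),...,S(α_k,β_k)} is an m-EEC if and only if the function ε(N) = Σ_{i=1}^k {Nθ_i + γ_i} is eventually constant, i.e., there exist a real number c and an integer N₀ such that ε(N) = c for all N ≥ N₀. -/
open scoped BigOperators

/-- The number of positive integers `n` with `⌊n·α + β⌋ = N`, i.e. the multiplicity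
of `N` in the Beatty sequence `S(α,β)`. -/
noncomputable def beattyCount (α β : ℝ) (N : ℤ) : ℕ :=
  Nat.card {n : ℕ // 0 < n ∧ ⌊(n : ℝ) * α + β⌋ = N}

/-- The family `{S(α i, β i)}` is an eventual exact `m`-cover. -/
def IsEEC {k : ℕ} (α β : Fin k → ℝ) (m : ℕ) : Prop :=
  ∃ N₀ : ℤ, ∀ N : ℤ, N ≥ N₀ → (∑ i, beattyCount (α i) (β i) N) = m

/-- The count of `n` with `⌊nα+β⌋ = N` as a difference of floors, under
non-degeneracy assumptions. -/
lemma beattyCount_eq (α β : ℝ) (hα : 0 < α) (N : ℤ)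
    (h1 : ∀ n : ℤ, (n : ℝ) ≠ ((N : ℝ) - β) / α)
    (h2 : ∀ n : ℤ, (n : ℝ) ≠ ((N : ℝ) + 1 - β) / α)
    (h3 : 0 < ((N : ℝ) - β) / α) :
    (beattyCount α β N : ℤ) = ⌊((N : ℝ) + 1 - β) / α⌋ - ⌊((N : ℝ) - β) / α⌋ := by
  set a : ℤ := ⌊((N : ℝ) - β) / α⌋ with ha_def
  set b : ℤ := ⌊((N : ℝ) + 1 - β) / α⌋ with hb_def
  have ha : 0 ≤ a := Int.floor_nonneg.2 h3.le
  have hab : a ≤ b := by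
    apply Int.floor_le_floor
    gcongr
    linarith
  have hiff : ∀ n : ℕ, (0 < n ∧ ⌊(n : ℝ) * α + β⌋ = N) ↔ n ∈ Set.Ioc a.toNat b.toNat := by
    intro n
    rw [Set.mem_Ioc]
    constructor
    · rintro ⟨-, hfl⟩
      rw [Int.floor_eq_iff] at hfl
      obtain ⟨hl, hr⟩ := hfl
      have hl' : ((N : ℝ) - β) / α ≤ (n : ℝ) := by
        rw [div_le_iff₀ hα]; linarith
      have hl'' : ((N : ℝ) - β) / α < (n : ℝ) := lt_of_le_of_ne hl' (fun h => h1 n h.symm)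
      have h4 : a < (n : ℤ) := by
        rw [ha_def, Int.floor_lt]; exact_mod_cast hl''
      have hr' : (n : ℝ) < ((N : ℝ) + 1 - β) / α := by
        rw [lt_div_iff₀ hα]; linarith
      have h5 : (n : ℤ) ≤ b := by
        rw [hb_def, Int.le_floor]; exact_mod_cast hr'.le
      omega
    · rintro ⟨hl, hr⟩
      have h4 : a < (n : ℤ) := by omega
      have h5 : (n : ℤ) ≤ b := by omega
      have hl' : ((N : ℝ) - β) / α < (n : ℝ) := by
        have := Int.floor_lt.1 h4
        exact_mod_cast this
      have hr'' : (n : ℝ) ≤ ((N : ℝ) + 1 - β) / α := by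
        have := Int.le_floor.1 h5
        exact_mod_cast this
      have hr' : (n : ℝ) < ((N : ℝ) + 1 - β) / α := lt_of_le_of_ne hr'' (h2 n)
      refine ⟨by omega, ?_⟩
      rw [Int.floor_eq_iff]
      constructor
      · have := (div_lt_iff₀ hα).1 hl'
        linarith
      · have := (lt_div_iff₀ hα).1 hr'
        push_cast
        linarith
    
  have hcard : beattyCount α β N = Nat.card (Set.Ioc a.toNat b.toNat) := by
    unfold beattyCount
    exact Nat.card_congr (Equiv.subtypeEquivRight hiff)
  rw [hcard, Nat.card_coe_set_eq, ← Finset.coe_Ioc, Set.ncard_coe_finset, Nat.card_Ioc]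
  omega

/-- Eventually, `(N - β)/α` is positive and never an integer. -/
lemma exists_good (α β : ℝ) (hα : 0 < α) (hirr : Irrational α) :
    ∃ M : ℤ, ∀ N : ℤ, N ≥ M →
      (0 < ((N : ℝ) - β) / α ∧ ∀ n : ℤ, (n : ℝ) ≠ ((N : ℝ) - β) / α) := by
  have hpos : ∀ N : ℤ, N ≥ ⌈β⌉ + 1 → 0 < ((N : ℝ) - β) / α := by
    intro N hN
    apply div_pos _ hα
    have : (β : ℝ) ≤ (⌈β⌉ : ℝ) := Int.le_ceil β
    have : ((⌈β⌉ + 1 : ℤ) : ℝ) ≤ (N : ℝ) := by exact_mod_cast hN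
    push_cast at this
    linarith [Int.le_ceil β]
  by_cases h : ∃ N₁ n₁ : ℤ, (n₁ : ℝ) = ((N₁ : ℝ) - β) / α
  · obtain ⟨N₁, n₁, hn₁⟩ := h
    refine ⟨max (N₁ + 1) (⌈β⌉ + 1), fun N hN => ⟨hpos N (le_trans (le_max_right _ _) hN), ?_⟩⟩
    intro n hn
    have hNne : N ≠ N₁ := by
      have := le_trans (le_max_left _ _) hN; omega
    have hα0 : (α : ℝ) ≠ 0 := ne_of_gt hα
    have e1 : (n : ℝ) * α = (N : ℝ) - β := by
      field_simp at hn; linarith [hn]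
    have e2 : (n₁ : ℝ) * α = (N₁ : ℝ) - β := by
      field_simp at hn₁; linarith [hn₁]
    have e3 : ((n : ℝ) - n₁) * α = (N : ℝ) - N₁ := by ring_nf; linarith
    have hnne : n ≠ n₁ := by
      intro hh
      apply hNne
      have : ((N : ℝ) - N₁) = 0 := by rw [← e3, hh]; ring
      have : (N : ℝ) = (N₁ : ℝ) := by linarith
      exact_mod_cast this
    apply hirr
    refine ⟨((N - N₁ : ℤ) : ℚ) / ((n - n₁ : ℤ) : ℚ), ?_⟩
    have hd : ((n : ℝ) - n₁) ≠ 0 := by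
      intro hh
      apply hnne
      have : (n : ℝ) = (n₁ : ℝ) := by linarith
      exact_mod_cast this
    push_cast
    field_simp
    linarith [e3]
  · push_neg at h
    exact ⟨⌈β⌉ + 1, fun N hN => ⟨hpos N hN, h N⟩⟩

theorem mEEC_iff_fract_sum_eventually_constant (m k : ℕ) (hm : 0 < m)
    (α β : Fin k → ℝ) (hpos : ∀ i, 0 < α i) (hirr : ∀ i, Irrational (α i))
    (hsum : ∑ i, 1 / α i = (m : ℝ)) :
    IsEEC α β m ↔
      ∃ (c : ℝ) (N₀ : ℤ), ∀ N : ℤ, N ≥ N₀ →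
        ∑ i, Int.fract ((N : ℝ) * (1 / α i) + (-(β i) / α i)) = c := by
  -- notation
  set ε : ℤ → ℝ := fun N => ∑ i, Int.fract ((N : ℝ) * (1 / α i) + (-(β i) / α i)) with hε
  have hx : ∀ (i : Fin k) (N : ℤ),
      (N : ℝ) * (1 / α i) + (-(β i) / α i) = ((N : ℝ) - β i) / α i := by
    intro i N
    field_simp
    ring
  -- good threshold
  choose M hM using fun i => exists_good (α i) (β i) (hpos i) (hirr i)
  set N₀ : ℤ := ((Finset.univ.sup fun i => (M i).toNat : ℕ) : ℤ) with hN₀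
  have hgood : ∀ (i : Fin k) (N : ℤ), N ≥ N₀ →
      (0 < ((N : ℝ) - β i) / α i ∧ ∀ n : ℤ, (n : ℝ) ≠ ((N : ℝ) - β i) / α i) := by
    intro i N hN
    apply hM i N
    have h1 : (M i) ≤ ((M i).toNat : ℤ) := Int.self_le_toNat _
    have h2 : (M i).toNat ≤ Finset.univ.sup fun i => (M i).toNat :=
      Finset.le_sup (f := fun i => (M i).toNat) (Finset.mem_univ i)
    have h2' : (((M i).toNat : ℤ)) ≤ N₀ := by rw [hN₀]; exact_mod_cast h2
    omega
  -- key identity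
  have key : ∀ N : ℤ, N ≥ N₀ →
      ((∑ i, beattyCount (α i) (β i) N : ℕ) : ℝ) = (m : ℝ) + ε N - ε (N + 1) := by
    intro N hN
    have hc : ∀ i : Fin k, ((beattyCount (α i) (β i) N : ℤ) : ℝ)
        = (⌊((N + 1 : ℤ) : ℝ) * (1 / α i) + (-(β i) / α i)⌋ : ℝ)
          - (⌊(N : ℝ) * (1 / α i) + (-(β i) / α i)⌋ : ℝ) := by
      intro i
      have hgN := hgood i N hN
      have hgN1 := hgood i (N + 1) (by omega)
      have hh := beattyCount_eq (α i) (β i) (hpos i) N hgN.2 ?_ hgN.1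
      · rw [hx i N, hx i (N + 1)]
        push_cast [hh]
        ring_nf
      · intro n
        have hh2 := hgN1.2 n
        push_cast at hh2
        exact hh2
    have e1 : ((∑ i, beattyCount (α i) (β i) N : ℕ) : ℝ)
        = ∑ i, ((beattyCount (α i) (β i) N : ℤ) : ℝ) := by push_cast; ring
    rw [e1, Finset.sum_congr rfl (fun i _ => hc i)]
    have hfr : ∀ (i : Fin k) (P : ℤ), (⌊(P : ℝ) * (1 / α i) + (-(β i) / α i)⌋ : ℝ)
        = ((P : ℝ) * (1 / α i) + (-(β i) / α i))
          - Int.fract ((P : ℝ) * (1 / α i) + (-(β i) / α i)) := by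
      intro i P
      rw [Int.fract]
      ring
    simp only [Finset.sum_sub_distrib, hfr]
    rw [hε]
    simp only [Finset.sum_sub_distrib]
    have hθ : ∀ P : ℤ, ∑ i, ((P : ℝ) * (1 / α i) + (-(β i) / α i))
        = (P : ℝ) * (m : ℝ) + ∑ i, (-(β i) / α i) := by
      intro P
      rw [Finset.sum_add_distrib, ← Finset.mul_sum, hsum]
    rw [hθ, hθ]
    push_cast
    ring
  constructor
  · rintro ⟨N₁, hEEC⟩
    refine ⟨ε (max N₀ N₁), max N₀ N₁, ?_⟩
    intro N hN
    refine Int.le_induction (motive := fun N _ => ε N = ε (max N₀ N₁)) rfl ?_ N hN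
    intro N hN' ih
    have hk := key N (le_trans (le_max_left _ _) hN')
    have he := hEEC N (le_trans (le_max_right _ _) hN')
    have h3 : ε (N + 1) = ε N := by rw [he] at hk; linarith
    show ε (N + 1) = _
    rw [h3, ih]
  · rintro ⟨c, N₁, hc⟩
    refine ⟨max N₀ N₁, fun N hN => ?_⟩
    have hk := key N (le_trans (le_max_left _ _) hN)
    have h1 := hc N (le_trans (le_max_right _ _) hN)
    have h2 := hc (N + 1) (by have := le_trans (le_max_right _ _) hN; omega)
    have h1' : ε N = c := h1
    have h2' : ε (N + 1) = c := h2
    have : ((∑ i, beattyCount (α i) (β i) N : ℕ) : ℝ) = (m : ℝ) := by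
      rw [hk, h1', h2']; ring
    exact_mod_cast this
end

section
/- With the notation of the fractional Beatty setup: if q > 2 and p₁ < p₀, then r(N) ∈ {⌊p/q⌋, ⌈p/q⌉, ⌈p/q⌉ + 1} for every positive integer N. -/
/-- `r(N)`: the number of pairs `(i, n)`, `i ∈ {1,2}`, `n ≥ 1`, with `⌊n·αᵢ⌋ = N`. -/
noncomputable def fracBeattyR (α₁ α₂ : ℝ) (N : ℤ) : ℕ :=
  beattyCount α₁ 0 N + beattyCount α₂ 0 N

lemma fract_pos_of_irrational {x : ℝ} (h : Irrational x) : 0 < Int.fract x := by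
  rcases lt_or_eq_of_le (Int.fract_nonneg x) with h' | h'
  · exact h'
  · exact absurd (by rw [Int.fract] at h'; linarith [h'.symm] : x = (⌊x⌋ : ℝ)) (h.ne_int ⌊x⌋)

lemma beattyCount_eq_s14 (α : ℝ) (hα : 0 < α) (hirr : Irrational α) (N : ℤ) (hN : 1 ≤ N) :
    (beattyCount α 0 N : ℤ) = ⌊((N : ℝ) + 1) * (1 / α)⌋ - ⌊(N : ℝ) * (1 / α)⌋ := by
  set a : ℤ := ⌊(N : ℝ) * (1 / α)⌋ with ha_def
  set b : ℤ := ⌊((N : ℝ) + 1) * (1 / α)⌋ with hb_def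
  have hNpos : (0 : ℝ) < N := by exact_mod_cast lt_of_lt_of_le zero_lt_one hN
  have hαinv : (0 : ℝ) < 1 / α := by positivity
  have ha0 : 0 ≤ a := Int.floor_nonneg.2 (by positivity)
  have hab : a ≤ b := Int.floor_le_floor (by nlinarith)
  have key : ∀ n : ℕ, (0 < n ∧ ⌊(n : ℝ) * α + 0⌋ = N) ↔ n ∈ Finset.Ioc a.toNat b.toNat := by
    intro n
    rw [Finset.mem_Ioc, add_zero]
    constructor
    · rintro ⟨hn, hfl⟩
      rw [Int.floor_eq_iff] at hfl
      obtain ⟨hfl1, hfl2⟩ := hfl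
      have hnirr : Irrational ((n : ℝ) * α) := by
        rw [mul_comm]
        exact irrational_mul_natCast_iff.2 ⟨hn.ne', hirr⟩
      have h1 : (N : ℝ) < n * α := lt_of_le_of_ne hfl1 (fun h => hnirr.ne_int N h.symm)
      have h2 : (N : ℝ) * (1 / α) < n := by
        rw [mul_one_div, div_lt_iff₀ hα]; nlinarith
      have h3 : (n : ℝ) < ((N : ℝ) + 1) * (1 / α) := by
        rw [mul_one_div, lt_div_iff₀ hα]; push_cast at hfl2 ⊢; nlinarith
      constructor
      · have : a < (n : ℤ) := Int.floor_lt.2 (by exact_mod_cast h2)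
        omega
      · have : (n : ℤ) ≤ b := Int.le_floor.2 (by exact_mod_cast h3.le)
        omega
    · rintro ⟨hlo, hhi⟩
      have hn : 0 < n := by omega
      have hnirr : Irrational ((n : ℝ) * α) := by
        rw [mul_comm]
        exact irrational_mul_natCast_iff.2 ⟨hn.ne', hirr⟩
      have hlo' : a < (n : ℤ) := by omega
      have hhi' : (n : ℤ) ≤ b := by omega
      have h2 : (N : ℝ) * (1 / α) < n := by
        have h := Int.lt_floor_add_one ((N : ℝ) * (1 / α))
        have hcast : ((a : ℝ) + 1) ≤ (n : ℝ) := by exact_mod_cast hlo'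
        linarith
      have h3 : (n : ℝ) ≤ ((N : ℝ) + 1) * (1 / α) := by
        have h := Int.floor_le (((N : ℝ) + 1) * (1 / α))
        have hcast : ((n : ℝ)) ≤ (b : ℝ) := by exact_mod_cast hhi'
        linarith
      have hNlt : (N : ℝ) < (n : ℝ) * α := by
        rw [mul_one_div, div_lt_iff₀ hα] at h2; nlinarith
      have hub : (n : ℝ) * α ≤ (N : ℝ) + 1 := by
        rw [mul_one_div, le_div_iff₀ hα] at h3; nlinarith
      have hub' : (n : ℝ) * α < (N : ℝ) + 1 :=
        lt_of_le_of_ne hub (fun h => hnirr.ne_int (N + 1) (by push_cast; linarith))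
      refine ⟨hn, ?_⟩
      rw [Int.floor_eq_iff]
      exact ⟨hNlt.le, by push_cast; linarith⟩
  have hcard : beattyCount α 0 N = (Finset.Ioc a.toNat b.toNat).card := by
    rw [beattyCount, ← Nat.card_eq_finsetCard]
    exact Nat.card_congr (Equiv.subtypeEquivRight key)
  rw [hcard, Nat.card_Ioc]
  omega

lemma floor_add_bounds (x y : ℝ) : ⌊x⌋ + ⌊y⌋ ≤ ⌊x + y⌋ ∧ ⌊x + y⌋ ≤ ⌊x⌋ + ⌊y⌋ + 1 := by
  constructor
  · apply Int.le_floor.2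
    push_cast
    linarith [Int.floor_le x, Int.floor_le y]
  · have : ⌊x + y⌋ < ⌊x⌋ + ⌊y⌋ + 2 := by
      apply Int.floor_lt.2
      push_cast
      linarith [Int.lt_floor_add_one x, Int.lt_floor_add_one y]
    omega

theorem fractional_beatty_values_case_one (p q : ℕ) (hp : 0 < p) (hq : 0 < q)
    (hpq : Nat.Coprime p q) (α₁ α₂ : ℝ) (h1 : 0 < α₁) (h2 : 0 < α₂)
    (hi1 : Irrational α₁) (hi2 : Irrational α₂)
    (hsum : 1 / α₁ + 1 / α₂ = (p : ℝ) / q)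
    (p₁ : ℕ) (hp₁ : p₁ < q)
    (hfr₁ : (p₁ : ℝ) / q < Int.fract (1 / α₁))
    (hfr₂ : Int.fract (1 / α₁) < ((p₁ : ℝ) + 1) / q)
    (hq2 : 2 < q) (hcase : p₁ < p % q) :
    ∀ N : ℤ, 1 ≤ N →
      (fracBeattyR α₁ α₂ N : ℤ) = ⌊(p : ℚ) / q⌋ ∨
      (fracBeattyR α₁ α₂ N : ℤ) = ⌈(p : ℚ) / q⌉ ∨
      (fracBeattyR α₁ α₂ N : ℤ) = ⌈(p : ℚ) / q⌉ + 1 := by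
  intro N hN
  have hqR : (0 : ℝ) < q := by exact_mod_cast hq
  set θ₁ : ℝ := 1 / α₁ with hθ₁
  set θ₂ : ℝ := 1 / α₂ with hθ₂
  set P : ℝ := (p : ℝ) / q with hP
  have hθ₂eq : θ₂ = P - θ₁ := by rw [hθ₂, hθ₁, hP]; linarith
  have hθ₁irr : Irrational θ₁ := by
    rw [hθ₁, one_div]; exact irrational_inv_iff.2 hi1
  have hθ₂irr : Irrational θ₂ := by
    rw [hθ₂, one_div]; exact irrational_inv_iff.2 hi2
  -- floor and fract of P
  set p₀ : ℕ := p % q with hp₀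
  set m : ℤ := ((p / q : ℕ) : ℤ) with hm
  have hdm : p = q * (p / q) + p₀ := (Nat.div_add_mod p q).symm
  have hp₀q : p₀ < q := Nat.mod_lt _ hq
  have hp₀pos : 0 < p₀ := by omega
  have hq0 : (q : ℝ) ≠ 0 := ne_of_gt hqR
  have hPsplit : P = (m : ℝ) + (p₀ : ℝ) / q := by
    have hcst : (p : ℝ) = (q : ℝ) * (m : ℝ) + (p₀ : ℝ) := by
      rw [hm]; exact_mod_cast congrArg (Nat.cast : ℕ → ℝ) hdm
    rw [hP, hcst, add_div, mul_div_cancel_left₀ _ hq0]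
  have h01a : (0 : ℝ) < (p₀ : ℝ) / q := by positivity
  have h01b : (p₀ : ℝ) / q < 1 := by
    rw [div_lt_one hqR]; exact_mod_cast hp₀q
  have hfloorP : ⌊P⌋ = m := by
    rw [Int.floor_eq_iff, hPsplit]
    constructor <;> push_cast <;> linarith
  have hfractP : Int.fract P = (p₀ : ℝ) / q := by
    rw [Int.fract, hfloorP, hPsplit]; ring
  -- cast goal floor/ceil to real
  have hQcast : (((p : ℚ) / q : ℚ) : ℝ) = P := by push_cast; rfl
  have hgoalfloor : ⌊(p : ℚ) / q⌋ = m := by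
    rw [← Rat.floor_cast (α := ℝ), hQcast, hfloorP]
  have hgoalceil : ⌈(p : ℚ) / q⌉ = m + 1 := by
    rw [← Rat.ceil_cast (α := ℝ), hQcast]
    have hlt : (m : ℝ) < P := by rw [hPsplit]; linarith
    have h1' : m < ⌈P⌉ := by
      have := Int.le_ceil P
      exact_mod_cast lt_of_lt_of_le hlt this
    have h2' : ⌈P⌉ ≤ ⌊P⌋ + 1 := Int.ceil_le_floor_add_one P
    omega
  -- the floors
  set F1 : ℤ := ⌊(N : ℝ) * θ₁⌋ with hF1
  set G1 : ℤ := ⌊((N : ℝ) + 1) * θ₁⌋ with hG1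
  set F2 : ℤ := ⌊(N : ℝ) * θ₂⌋ with hF2
  set G2 : ℤ := ⌊((N : ℝ) + 1) * θ₂⌋ with hG2
  set Fp : ℤ := ⌊(N : ℝ) * P⌋ with hFp
  set Gp : ℤ := ⌊((N : ℝ) + 1) * P⌋ with hGp
  have hrval : (fracBeattyR α₁ α₂ N : ℤ) = (G1 - F1) + (G2 - F2) := by
    rw [fracBeattyR]
    push_cast
    rw [beattyCount_eq_s14 α₁ h1 hi1 N hN, beattyCount_eq_s14 α₂ h2 hi2 N hN]
  -- sum relations
  have hsF : (N : ℝ) * θ₁ + (N : ℝ) * θ₂ = (N : ℝ) * P := by rw [hθ₂eq]; ring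
  have hsG : ((N : ℝ) + 1) * θ₁ + ((N : ℝ) + 1) * θ₂ = ((N : ℝ) + 1) * P := by
    rw [hθ₂eq]; ring
  have hbF := floor_add_bounds ((N : ℝ) * θ₁) ((N : ℝ) * θ₂)
  rw [hsF, ← hF1, ← hF2, ← hFp] at hbF
  have hbG := floor_add_bounds (((N : ℝ) + 1) * θ₁) (((N : ℝ) + 1) * θ₂)
  rw [hsG, ← hG1, ← hG2, ← hGp] at hbG
  have hbP := floor_add_bounds ((N : ℝ) * P) P
  have hsP : (N : ℝ) * P + P = ((N : ℝ) + 1) * P := by ring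
  rw [hsP, hfloorP, ← hFp, ← hGp] at hbP
  -- d for θ₁
  have hbd := floor_add_bounds ((N : ℝ) * θ₁) θ₁
  have hsd : (N : ℝ) * θ₁ + θ₁ = ((N : ℝ) + 1) * θ₁ := by ring
  rw [hsd, ← hF1, ← hG1] at hbd
  -- exclude r = m - 1
  have hexclude : ¬ ((G1 - F1) + (G2 - F2) = m - 1) := by
    intro hbad
    have hA : F1 + F2 = Fp := by omega
    have hB : G1 + G2 = Gp - 1 := by omega
    have hC : Gp = Fp + m := by omega
    -- fract identities
    have e1 : Int.fract ((N : ℝ) * θ₁) + Int.fract ((N : ℝ) * θ₂)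
        = Int.fract ((N : ℝ) * P) := by
      have hcast : (F1 : ℝ) + (F2 : ℝ) = (Fp : ℝ) := by exact_mod_cast hA
      simp only [Int.fract, ← hF1, ← hF2, ← hFp]
      push_cast at hcast ⊢
      linarith [hsF]
    have e2 : Int.fract (((N : ℝ) + 1) * θ₁) + Int.fract (((N : ℝ) + 1) * θ₂)
        = Int.fract (((N : ℝ) + 1) * P) + 1 := by
      have hcast : (G1 : ℝ) + (G2 : ℝ) = (Gp : ℝ) - 1 := by
        have : ((G1 + G2 : ℤ) : ℝ) = ((Gp - 1 : ℤ) : ℝ) := by exact_mod_cast hB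
        push_cast at this; linarith
      simp only [Int.fract, ← hG1, ← hG2, ← hGp]
      push_cast at hcast ⊢
      linarith [hsG]
    have e3 : Int.fract (((N : ℝ) + 1) * P) = Int.fract ((N : ℝ) * P) + (p₀ : ℝ) / q := by
      have hcast : (Gp : ℝ) = (Fp : ℝ) + (m : ℝ) := by exact_mod_cast hC
      simp only [Int.fract, ← hFp, ← hGp]
      have : ((N : ℝ) + 1) * P = (N : ℝ) * P + P := by ring
      rw [this, hPsplit]
      linarith
    have e4 : Int.fract (((N : ℝ) + 1) * θ₁)
        = Int.fract ((N : ℝ) * θ₁) + Int.fract θ₁ - ((G1 : ℝ) - F1 - ⌊θ₁⌋) := by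
      simp only [Int.fract, ← hF1, ← hG1]
      ring
    -- positivity facts
    have hNne : N ≠ 0 := by omega
    have fpos2 : 0 < Int.fract ((N : ℝ) * θ₂) := by
      apply fract_pos_of_irrational
      exact irrational_intCast_mul_iff.2 ⟨hNne, hθ₂irr⟩
    have flt2 : Int.fract (((N : ℝ) + 1) * θ₂) < 1 := Int.fract_lt_one _
    have hlt1 : Int.fract ((N : ℝ) * θ₁) < Int.fract ((N : ℝ) * P) := by linarith
    have hgt1 : Int.fract (((N : ℝ) + 1) * P) < Int.fract (((N : ℝ) + 1) * θ₁) := by linarith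
    have hθfr : Int.fract θ₁ < (p₀ : ℝ) / q := by
      have hnum : (p₁ : ℝ) + 1 ≤ (p₀ : ℝ) := by
        have := Nat.succ_le_of_lt hcase
        exact_mod_cast this
      have hle : ((p₁ : ℝ) + 1) / q ≤ (p₀ : ℝ) / q := by gcongr
      linarith
    have hfrθlt1 : Int.fract θ₁ < 1 := Int.fract_lt_one _
    have hd : G1 - F1 - ⌊θ₁⌋ = 0 ∨ G1 - F1 - ⌊θ₁⌋ = 1 := by omega
    rcases hd with hd | hd
    · have hd' : ((G1 - F1 - ⌊θ₁⌋ : ℤ) : ℝ) = 0 := by exact_mod_cast hd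
      push_cast at hd'
      linarith
    · have hd' : ((G1 - F1 - ⌊θ₁⌋ : ℤ) : ℝ) = 1 := by exact_mod_cast hd
      push_cast at hd'
      linarith
  have hlow : m - 1 ≤ (G1 - F1) + (G2 - F2) := by omega
  have hhigh : (G1 - F1) + (G2 - F2) ≤ m + 2 := by omega
  rw [hrval, hgoalfloor, hgoalceil]
  omega
end
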